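/- Every canonical n×m binary matrix is semi-canonical. -/

import Mathlib

/-- The value of a row of length `m` read as a binary number (most significant digit first). -/
def rowVal (m : ℕ) (row : Fin m → Bool) : ℕ :=
  ∑ j : Fin m, (row j).toNat * 2 ^ (m - 1 - (j : ℕ))

/-- `r(A)`: the tuple of row values of a binary matrix. -/
def rtup {n m : ℕ} (A : Fin n → Fin m → Bool) : Fin n → ℕ :=
  fun i => rowVal m (A i)

/-- `c(A)`: the tuple of column values of a binary matrix. -/
def ctup {n m : ℕ} (A : Fin n → Fin m → Bool) : Fin m → ℕ :=
  fun j => rowVal n (fun i => A i j)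

/-- `A ∼ B`: `B` is obtained from `A` by permuting rows and columns. -/
def MatEquiv {n m : ℕ} (A B : Fin n → Fin m → Bool) : Prop :=
  ∃ (ρ : Equiv.Perm (Fin n)) (σ : Equiv.Perm (Fin m)), ∀ i j, B i j = A (ρ i) (σ j)

/-- `A` is semi-canonical: both `r(A)` and `c(A)` are weakly increasing. -/
def SemiCanonical {n m : ℕ} (A : Fin n → Fin m → Bool) : Prop :=
  Monotone (rtup A) ∧ Monotone (ctup A)

/-- `A` is canonical: `r(A)` is the lexicographic minimum over the equivalence class of `A`. -/
def Canonical {n m : ℕ} (A : Fin n → Fin m → Bool) : Prop :=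
  ∀ B, MatEquiv A B → toLex (rtup A) ≤ toLex (rtup B)

lemma sum_two_pow_lt (t : ℕ) : ∑ k ∈ Finset.range t, 2 ^ k < 2 ^ t := by
  induction t with
  | zero => simp
  | succ t ih =>
    rw [Finset.sum_range_succ, pow_succ]
    omega

/-- key: if x, y agree before i0, x i0 = false, y i0 = true, then rowVal x < rowVal y -/
lemma rowVal_lt {m : ℕ} {x y : Fin m → Bool} {i0 : Fin m}
    (h0 : x i0 = false) (h1 : y i0 = true) (hpre : ∀ j : Fin m, j < i0 → x j = y j) :
    rowVal m x < rowVal m y := by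
  classical
  set S1 : Finset (Fin m) := Finset.univ.filter (· < i0) with hS1
  set S3 : Finset (Fin m) := Finset.univ.filter (i0 < ·) with hS3
  have hsplit : ∀ z : Fin m → Bool, rowVal m z =
      (∑ j ∈ S1, (z j).toNat * 2 ^ (m - 1 - (j : ℕ)))
      + ((z i0).toNat * 2 ^ (m - 1 - (i0 : ℕ))
        + ∑ j ∈ S3, (z j).toNat * 2 ^ (m - 1 - (j : ℕ))) := by
    intro z
    have hpart : Finset.univ = S1 ∪ (insert i0 S3) := by
      ext j
      simp only [hS1, hS3, Finset.mem_union, Finset.mem_insert, Finset.mem_filter,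
        Finset.mem_univ, true_and]
      rcases lt_trichotomy j i0 with h | h | h <;> simp [h]
    have hdisj : Disjoint S1 (insert i0 S3) := by
      rw [Finset.disjoint_left]
      intro a ha hb
      simp only [hS1, Finset.mem_filter, Finset.mem_univ, true_and] at ha
      simp only [hS3, Finset.mem_insert, Finset.mem_filter, Finset.mem_univ, true_and] at hb
      rcases hb with rfl | hb
      · exact absurd ha (lt_irrefl _)
      · exact absurd (ha.trans hb) (lt_irrefl _)
    have hni : i0 ∉ S3 := by simp [hS3]
    rw [rowVal, hpart, Finset.sum_union hdisj, Finset.sum_insert hni]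
  have hS1eq : (∑ j ∈ S1, (x j).toNat * 2 ^ (m - 1 - (j : ℕ)))
      = ∑ j ∈ S1, (y j).toNat * 2 ^ (m - 1 - (j : ℕ)) := by
    apply Finset.sum_congr rfl
    intro j hj
    simp only [hS1, Finset.mem_filter, Finset.mem_univ, true_and] at hj
    rw [hpre j hj]
  have htail : (∑ j ∈ S3, (x j).toNat * 2 ^ (m - 1 - (j : ℕ))) < 2 ^ (m - 1 - (i0 : ℕ)) := by
    have h1' : (∑ j ∈ S3, (x j).toNat * 2 ^ (m - 1 - (j : ℕ)))
        ≤ ∑ j ∈ S3, 2 ^ (m - 1 - (j : ℕ)) := by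
      apply Finset.sum_le_sum
      intro j _
      have : (x j).toNat ≤ 1 := Bool.toNat_le _
      nlinarith [pow_pos (by norm_num : (0:ℕ) < 2) (m - 1 - (j : ℕ))]
    have h2' : (∑ j ∈ S3, 2 ^ (m - 1 - (j : ℕ)))
        ≤ ∑ k ∈ Finset.range (m - 1 - (i0 : ℕ)), 2 ^ k := by
      have hinj : Set.InjOn (fun j : Fin m => m - 1 - (j : ℕ)) S3 := by
        intro a _ b _ hab
        have ha := a.isLt
        have hb := b.isLt
        simp only at hab
        exact Fin.ext (by omega)
      rw [← Finset.sum_image (f := fun k => 2 ^ k) (fun a ha b hb h => hinj ha hb h)]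
      apply Finset.sum_le_sum_of_subset
      intro k hk
      simp only [Finset.mem_image, hS3, Finset.mem_filter, Finset.mem_univ, true_and] at hk
      obtain ⟨j, hj, rfl⟩ := hk
      have hj' := j.isLt
      have hlt : (i0 : ℕ) < (j : ℕ) := hj
      simp only [Finset.mem_range]
      omega
    calc (∑ j ∈ S3, (x j).toNat * 2 ^ (m - 1 - (j : ℕ)))
        ≤ ∑ k ∈ Finset.range (m - 1 - (i0 : ℕ)), 2 ^ k := h1'.trans h2'
      _ < 2 ^ (m - 1 - (i0 : ℕ)) := sum_two_pow_lt _
  rw [hsplit x, hsplit y, h0, h1, hS1eq]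
  simp only [Bool.toNat_false, Bool.toNat_true, zero_mul, one_mul, zero_add]
  have hy : 0 ≤ ∑ j ∈ S3, (y j).toNat * 2 ^ (m - 1 - (j : ℕ)) := Nat.zero_le _
  omega

theorem canonical_is_semiCanonical {n m : ℕ} (A : Fin n → Fin m → Bool)
    (hA : Canonical A) : SemiCanonical A := by
  classical
  constructor
  · -- rows monotone
    intro i i' hle
    by_contra hcon
    push_neg at hcon
    have hne : i ≠ i' := fun h => by subst h; exact lt_irrefl _ hcon
    have hlt : i < i' := lt_of_le_of_ne hle hne
    set ρ := Equiv.swap i i' with hρ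
    set B : Fin n → Fin m → Bool := fun k l => A (ρ k) l with hB
    have hequiv : MatEquiv A B := ⟨ρ, 1, fun k l => rfl⟩
    have hle' := hA B hequiv
    have hltB : toLex (rtup B) < toLex (rtup A) := by
      refine ⟨i, fun k hk => ?_, ?_⟩
      · have h1 : ρ k = k := Equiv.swap_apply_of_ne_of_ne (ne_of_lt hk) (ne_of_lt (hk.trans hlt))
        simp only [Pi.toLex_apply, rtup, hB, h1]
      · have h2 : ρ i = i' := Equiv.swap_apply_left i i'
        simpa only [Pi.toLex_apply, rtup, hB, h2] using hcon
    exact absurd hle' hltB.not_ge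
  · -- columns monotone
    intro j j' hle
    by_contra hcon
    push_neg at hcon
    have hne : j ≠ j' := fun h => by subst h; exact lt_irrefl _ hcon
    have hjlt : j < j' := lt_of_le_of_ne hle hne
    -- find first row where columns j and j' differ
    have hvne : (fun i => A i j) ≠ (fun i => A i j') := by
      intro h
      rw [ctup, ctup] at hcon
      rw [h] at hcon
      exact lt_irrefl _ hcon
    have hD : ∃ i : Fin n, A i j ≠ A i j' := by
      by_contra h
      push_neg at h
      exact hvne (funext h)
    obtain ⟨i0, hi0mem, hi0min⟩ :=
      (Finset.univ.filter (fun i : Fin n => A i j ≠ A i j')).exists_min_image id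
        (by obtain ⟨i, hi⟩ := hD; exact ⟨i, by simp [hi]⟩)
    simp only [Finset.mem_filter, Finset.mem_univ, true_and] at hi0mem
    have hpre : ∀ i : Fin n, i < i0 → A i j = A i j' := by
      intro i hi
      by_contra h
      have := hi0min i (by simp [h])
      simp only [id] at this
      exact absurd hi (not_lt.2 this)
    -- at i0, column j must be true, column j' false
    have hbits : A i0 j = true ∧ A i0 j' = false := by
      rcases Bool.eq_false_or_eq_true (A i0 j) with h | h
      · refine ⟨h, ?_⟩
        rcases Bool.eq_false_or_eq_true (A i0 j') with h'' | h''
        · exact absurd (h.trans h''.symm) hi0mem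
        · exact h''
      · exfalso
        have h' : A i0 j' = true := by
          rcases Bool.eq_false_or_eq_true (A i0 j') with h'' | h''
          · exact h''
          · exact absurd (h.trans h''.symm) hi0mem
        have := rowVal_lt (x := fun i => A i j) (y := fun i => A i j') (i0 := i0) h h' hpre
        rw [ctup, ctup] at hcon
        omega
    -- swap columns j j'
    set σ := Equiv.swap j j' with hσ
    set B : Fin n → Fin m → Bool := fun k l => A k (σ l) with hB
    have hequiv : MatEquiv A B := ⟨1, σ, fun k l => rfl⟩
    have hle' := hA B hequiv
    have hltB : toLex (rtup B) < toLex (rtup A) := by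
      refine ⟨i0, fun k hk => ?_, ?_⟩
      · -- rows before i0 unchanged
        have : B k = A k := by
          funext l
          simp only [hB, hσ]
          rcases eq_or_ne l j with rfl | hlj
          · rw [Equiv.swap_apply_left]
            exact (hpre k hk).symm
          rcases eq_or_ne l j' with rfl | hlj'
          · rw [Equiv.swap_apply_right]
            exact hpre k hk
          · rw [Equiv.swap_apply_of_ne_of_ne hlj hlj']
        simp only [Pi.toLex_apply, rtup, this]
      · -- row i0 strictly decreases
        apply rowVal_lt (i0 := j)
        · simp only [hB, hσ, Equiv.swap_apply_left]
          exact hbits.2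
        · exact hbits.1
        · intro l hl
          simp only [hB, hσ]
          rw [Equiv.swap_apply_of_ne_of_ne (ne_of_lt hl) (ne_of_lt (hl.trans hjlt))]
    exact absurd hle' hltB.not_ge
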